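/- Let n ≥ 1 and let P_n denote the space of real polynomial functions of degree at most n on ℝ. Then the real linear span of the set {(fg)' : f, g ∈ P_n} of derivatives of products of two elements of P_n is exactly P_{2n−1}, the space of polynomial functions of degree at most 2n−1. -/

import Mathlib

/-- The space of real polynomial functions on `ℝ` of degree at most `m`,
realised as the span of the monomials `x ^ k` for `k ≤ m`. -/
noncomputable def polyFunSpace (m : ℕ) : Submodule ℝ (ℝ → ℝ) :=
  Submodule.span ℝ {p : ℝ → ℝ | ∃ k ≤ m, p = fun x : ℝ => x ^ k}

lemma mem_polyFunSpace_of_poly (m : ℕ) (p : Polynomial ℝ) (hm : p.natDegree ≤ m) :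
    (fun x : ℝ => p.eval x) ∈ polyFunSpace m := by
  have : (fun x : ℝ => p.eval x) =
      ∑ k ∈ Finset.range (p.natDegree + 1), p.coeff k • (fun x : ℝ => x ^ k) := by
    funext x
    simp only [Finset.sum_apply, Pi.smul_apply, smul_eq_mul]
    exact Polynomial.eval_eq_sum_range x
  rw [this]
  refine Submodule.sum_mem _ fun k hk => Submodule.smul_mem _ _ ?_
  refine Submodule.subset_span ⟨k, ?_, rfl⟩
  simp only [Finset.mem_range] at hk
  omega

lemma exists_poly_of_mem (m : ℕ) (f : ℝ → ℝ) (hf : f ∈ polyFunSpace m) :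
    ∃ p : Polynomial ℝ, p.natDegree ≤ m ∧ f = fun x => p.eval x := by
  induction hf using Submodule.span_induction with
  | mem g hg =>
    obtain ⟨k, hk, rfl⟩ := hg
    exact ⟨Polynomial.X ^ k, by simpa using hk, by funext x; simp⟩
  | zero => exact ⟨0, by simp, by funext x; simp⟩
  | add g h _ _ ihg ihh =>
    obtain ⟨p, hp, rfl⟩ := ihg
    obtain ⟨q, hq, rfl⟩ := ihh
    exact ⟨p + q, le_trans (Polynomial.natDegree_add_le p q) (by omega),
      by funext x; simp⟩
  | smul c g _ ihg =>
    obtain ⟨p, hp, rfl⟩ := ihg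
    refine ⟨Polynomial.C c * p, le_trans (Polynomial.natDegree_mul_le) (by simp; omega), ?_⟩
    funext x; simp

/-- For `n ≥ 1`, the span of `{(fg)' : f, g ∈ Pₙ}` is exactly `P_{2n-1}`. -/
theorem span_deriv_products_polynomials (n : ℕ) (hn : 1 ≤ n) :
    Submodule.span ℝ {h : ℝ → ℝ |
        ∃ f ∈ polyFunSpace n, ∃ g ∈ polyFunSpace n,
          h = deriv (fun x => f x * g x)} =
      polyFunSpace (2 * n - 1) := by
  apply le_antisymm
  · rw [Submodule.span_le]
    rintro h ⟨f, hf, g, hg, rfl⟩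
    obtain ⟨p, hp, rfl⟩ := exists_poly_of_mem n f hf
    obtain ⟨q, hq, rfl⟩ := exists_poly_of_mem n g hg
    have : deriv (fun x => Polynomial.eval x p * Polynomial.eval x q) =
        fun x => Polynomial.eval x (Polynomial.derivative (p * q)) := by
      funext x
      have : (fun x => Polynomial.eval x p * Polynomial.eval x q) =
          fun x => Polynomial.eval x (p * q) := by funext y; simp
      rw [this, Polynomial.deriv]
    rw [this]
    apply mem_polyFunSpace_of_poly
    have h1 := Polynomial.natDegree_derivative_le (p * q)
    have h2 := Polynomial.natDegree_mul_le (p := p) (q := q)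
    omega
  · rw [polyFunSpace, Submodule.span_le]
    rintro h ⟨k, hk, rfl⟩
    set a := min n (k + 1) with ha
    set b := k + 1 - a with hb
    have hab : a + b = k + 1 := by omega
    have han : a ≤ n := by omega
    have hbn : b ≤ n := by omega
    have hfa : (fun x : ℝ => x ^ a) ∈ polyFunSpace n :=
      Submodule.subset_span ⟨a, han, rfl⟩
    have hgb : (fun x : ℝ => x ^ b) ∈ polyFunSpace n :=
      Submodule.subset_span ⟨b, hbn, rfl⟩
    have hmem : deriv (fun x : ℝ => x ^ a * x ^ b) ∈
        Submodule.span ℝ {h : ℝ → ℝ |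
          ∃ f ∈ polyFunSpace n, ∃ g ∈ polyFunSpace n,
            h = deriv (fun x => f x * g x)} :=
      Submodule.subset_span ⟨_, hfa, _, hgb, rfl⟩
    have hderiv : deriv (fun x : ℝ => x ^ a * x ^ b) =
        fun x : ℝ => (k + 1 : ℝ) * x ^ k := by
      have : (fun x : ℝ => x ^ a * x ^ b) = fun x : ℝ => x ^ (k + 1) := by
        funext x; rw [← pow_add, hab]
      rw [this]
      funext x
      rw [deriv_pow_field]
      push_cast
      ring
    have : (fun x : ℝ => x ^ k) =
        ((k + 1 : ℝ))⁻¹ • deriv (fun x : ℝ => x ^ a * x ^ b) := by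
      rw [hderiv]
      funext x
      have : (k + 1 : ℝ) ≠ 0 := by positivity
      simp only [Pi.smul_apply, smul_eq_mul]
      field_simp
    rw [this]
    exact Submodule.smul_mem _ _ hmem
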